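/- Let H₁,…,H_m be traceless Hermitian d×d complex matrices. If the tuple (H₁,…,H_m) is simultaneously stoquasticizable, then the J-closure W of {H₁,…,H_m} satisfies 2·dim_ℝ(W) ≤ d² + d − 1. -/

import Mathlib

open Matrix

/-- The traceless Jordan product `J(A,B) = (AB + BA)/2 − (Tr(AB)/d)·I`. -/
noncomputable def tracelessJordan {d : ℕ} (A B : Matrix (Fin d) (Fin d) ℂ) :
    Matrix (Fin d) (Fin d) ℂ :=
  (2⁻¹ : ℂ) • (A * B + B * A) - ((A * B).trace / (d : ℂ)) • (1 : Matrix (Fin d) (Fin d) ℂ)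

/-- An `ℝ`-subspace of the `d × d` complex matrices is J-closed if it is closed under
the traceless Jordan product. -/
def JClosed {d : ℕ} (W : Submodule ℝ (Matrix (Fin d) (Fin d) ℂ)) : Prop :=
  ∀ X ∈ W, ∀ Y ∈ W, tracelessJordan X Y ∈ W

/-- The J-closure of a set of matrices: the smallest J-closed `ℝ`-subspace
containing it. -/
noncomputable def JClosure {d : ℕ} (S : Set (Matrix (Fin d) (Fin d) ℂ)) :
    Submodule ℝ (Matrix (Fin d) (Fin d) ℂ) :=
  sInf {W | JClosed W ∧ S ⊆ W}

/-- A matrix is stoquastic if it is Hermitian and all off-diagonal entries are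
real and nonpositive. -/
def IsStoquastic {d : ℕ} (H : Matrix (Fin d) (Fin d) ℂ) : Prop :=
  H.IsHermitian ∧ ∀ j k : Fin d, j ≠ k → (H j k).im = 0 ∧ (H j k).re ≤ 0

/-- A tuple of Hermitian matrices is simultaneously stoquasticizable if a single
unitary conjugates all of them into stoquastic form. -/
def SimStoquasticizable {d m : ℕ} (H : Fin m → Matrix (Fin d) (Fin d) ℂ) : Prop :=
  ∃ U ∈ Matrix.unitaryGroup (Fin d) ℂ, ∀ j, IsStoquastic (U * H j * Uᴴ)


/-- real symmetric traceless complex matrices -/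
noncomputable def Srs (d : ℕ) : Submodule ℝ (Matrix (Fin d) (Fin d) ℂ) where
  carrier := {A | (∀ i j, (A i j).im = 0) ∧ (∀ i j, A j i = A i j) ∧ A.trace = 0}
  zero_mem' := by simp
  add_mem' := by
    rintro A B ⟨hA1, hA2, hA3⟩ ⟨hB1, hB2, hB3⟩
    refine ⟨fun i j => ?_, fun i j => ?_, ?_⟩
    · simp [Matrix.add_apply, hA1, hB1]
    · simp [Matrix.add_apply, hA2, hB2]
    · simp [trace_add, hA3, hB3]
  smul_mem' := by
    rintro r A ⟨hA1, hA2, hA3⟩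
    refine ⟨fun i j => ?_, fun i j => ?_, ?_⟩
    · simp [Matrix.smul_apply, hA1, Complex.smul_im]
    · simp [Matrix.smul_apply, hA2]
    · simp [trace_smul, hA3]

lemma mul_mem_real {d : ℕ} {A B : Matrix (Fin d) (Fin d) ℂ}
    (hA : ∀ i j, (A i j).im = 0) (hB : ∀ i j, (B i j).im = 0) :
    ∀ i j, ((A * B) i j).im = 0 := by
  intro i j
  simp only [Matrix.mul_apply, Complex.im_sum, Complex.mul_im, hA, hB]
  simp

lemma mul_symm_swap {d : ℕ} {A B : Matrix (Fin d) (Fin d) ℂ}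
    (hA : ∀ i j, A j i = A i j) (hB : ∀ i j, B j i = B i j) :
    ∀ i j, (A * B) j i = (B * A) i j := by
  intro i j
  simp only [Matrix.mul_apply]
  rw [Finset.sum_congr rfl (fun k _ => by rw [hA k j, hB i k, mul_comm])]

lemma jordan_mem_Srs {d : ℕ} (hd : d ≠ 0) {A B : Matrix (Fin d) (Fin d) ℂ}
    (hA : A ∈ Srs d) (hB : B ∈ Srs d) : tracelessJordan A B ∈ Srs d := by
  obtain ⟨hA1, hA2, hA3⟩ := hA
  obtain ⟨hB1, hB2, hB3⟩ := hB
  have hABre : ∀ i j, ((A * B) i j).im = 0 := mul_mem_real hA1 hB1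
  have hBAre : ∀ i j, ((B * A) i j).im = 0 := mul_mem_real hB1 hA1
  have htr_im : ((A * B).trace).im = 0 := by
    simp only [Matrix.trace, Matrix.diag, Complex.im_sum]
    exact Finset.sum_eq_zero fun i _ => hABre i i
  refine ⟨fun i j => ?_, fun i j => ?_, ?_⟩
  · simp only [tracelessJordan, Matrix.sub_apply, Matrix.smul_apply, Matrix.add_apply,
      Complex.sub_im, smul_eq_mul, Complex.mul_im]
    have h1 : ((1 : Matrix (Fin d) (Fin d) ℂ) i j).im = 0 := by
      by_cases h : i = j <;> simp [Matrix.one_apply, h]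
    have h1' : ((A * B).trace / (d : ℂ)).im = 0 := by
      rw [Complex.div_im]
      simp [htr_im, Complex.ofReal_natCast]
    simp [hABre, hBAre, h1, h1']
  · simp only [tracelessJordan, Matrix.sub_apply, Matrix.smul_apply, Matrix.add_apply]
    rw [mul_symm_swap hA2 hB2 i j, mul_symm_swap hB2 hA2 i j]
    have : (1 : Matrix (Fin d) (Fin d) ℂ) j i = (1 : Matrix (Fin d) (Fin d) ℂ) i j := by
      by_cases h : i = j <;> simp [Matrix.one_apply, h, Ne.symm]
    rw [this]; ring_nf
  · simp only [tracelessJordan, trace_sub, trace_smul, trace_add, trace_one, smul_eq_mul]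
    rw [Matrix.trace_mul_comm B A]
    have hdc : (d : ℂ) ≠ 0 := Nat.cast_ne_zero.mpr hd
    field_simp
    simp only [Fintype.card_fin]; ring

noncomputable def conjL {d : ℕ} (U : Matrix (Fin d) (Fin d) ℂ) :
    Matrix (Fin d) (Fin d) ℂ →ₗ[ℝ] Matrix (Fin d) (Fin d) ℂ where
  toFun M := U * M * Uᴴ
  map_add' X Y := by noncomm_ring
  map_smul' r X := by simp [Matrix.mul_smul, Matrix.smul_mul]

section conj
variable {d : ℕ} {U : Matrix (Fin d) (Fin d) ℂ} (hU : U ∈ Matrix.unitaryGroup (Fin d) ℂ)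
include hU

lemma hU1 : Uᴴ * U = 1 := by
  have := (Unitary.mem_iff.mp hU).1
  rwa [Matrix.star_eq_conjTranspose] at this

lemma hU2 : U * Uᴴ = 1 := by
  have := (Unitary.mem_iff.mp hU).2
  rwa [Matrix.star_eq_conjTranspose] at this

lemma hU1' : ∀ Z : Matrix (Fin d) (Fin d) ℂ, Uᴴ * (U * Z) = Z := fun Z => by
  rw [← Matrix.mul_assoc, hU1 hU, Matrix.one_mul]

lemma conjL_cancel : ∀ X : Matrix (Fin d) (Fin d) ℂ, Uᴴ * (U * X * Uᴴ) * U = X := fun X => by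
  calc Uᴴ * (U * X * Uᴴ) * U = (Uᴴ * (U * (X * Uᴴ))) * U := by rw [Matrix.mul_assoc U X Uᴴ]
  _ = (X * Uᴴ) * U := by rw [hU1' hU (X * Uᴴ)]
  _ = X := by rw [Matrix.mul_assoc, hU1 hU, Matrix.mul_one]

lemma conjL_injective : Function.Injective (conjL U) := by
  intro X Y h
  have h2 : U * X * Uᴴ = U * Y * Uᴴ := h
  have h' := congrArg (fun M => Uᴴ * M * U) h2
  simpa only [conjL_cancel hU] using h'

lemma conjL_mul (X Y : Matrix (Fin d) (Fin d) ℂ) :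
    (conjL U X) * (conjL U Y) = conjL U (X * Y) := by
  show (U * X * Uᴴ) * (U * Y * Uᴴ) = U * (X * Y) * Uᴴ
  calc (U * X * Uᴴ) * (U * Y * Uᴴ) = (U * X) * (Uᴴ * (U * (Y * Uᴴ))) := by
        simp only [Matrix.mul_assoc]
  _ = (U * X) * (Y * Uᴴ) := by rw [hU1' hU]
  _ = U * (X * Y) * Uᴴ := by simp only [Matrix.mul_assoc]

lemma conjL_trace (X : Matrix (Fin d) (Fin d) ℂ) : (conjL U X).trace = X.trace := by
  show (U * X * Uᴴ).trace = X.trace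
  rw [Matrix.trace_mul_comm, ← Matrix.mul_assoc, hU1 hU, Matrix.one_mul]

lemma conjL_jordan (X Y : Matrix (Fin d) (Fin d) ℂ) :
    conjL U (tracelessJordan X Y) = tracelessJordan (conjL U X) (conjL U Y) := by
  unfold tracelessJordan
  rw [conjL_mul hU X Y, conjL_mul hU Y X, conjL_trace hU]
  show U * ((2⁻¹ : ℂ) • (X * Y + Y * X) - ((X * Y).trace / (d : ℂ)) • 1) * Uᴴ =
    (2⁻¹ : ℂ) • (U * (X * Y) * Uᴴ + U * (Y * X) * Uᴴ) - ((X * Y).trace / (d : ℂ)) • 1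
  rw [Matrix.mul_sub, Matrix.sub_mul, Matrix.mul_smul, Matrix.smul_mul,
    Matrix.mul_smul, Matrix.smul_mul, Matrix.mul_one, hU2 hU, Matrix.mul_add, Matrix.add_mul]

end conj

lemma stoquastic_mem_Srs {d : ℕ} {K : Matrix (Fin d) (Fin d) ℂ}
    (hK : IsStoquastic K) (htr : K.trace = 0) : K ∈ Srs d := by
  obtain ⟨hHerm, hoff⟩ := hK
  have him : ∀ i j, (K i j).im = 0 := by
    intro i j
    by_cases h : i = j
    · subst h
      have := congrFun (congrFun hHerm i) i
      rw [Matrix.conjTranspose_apply] at this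
      have : (starRingEnd ℂ) (K i i) = K i i := this
      exact (Complex.conj_eq_iff_im.mp this)
    · exact (hoff i j h).1
  refine ⟨him, fun i j => ?_, htr⟩
  have h := congrFun (congrFun hHerm i) j
  rw [Matrix.conjTranspose_apply] at h
  have h' : (starRingEnd ℂ) (K j i) = K i j := h
  rw [Complex.conj_eq_iff_im.mpr (him j i)] at h'
  exact h'

noncomputable def phiMap (d : ℕ) : Matrix (Fin d) (Fin d) ℂ →ₗ[ℝ] (Sym2 (Fin d) → ℝ) where
  toFun A := fun e => (A e.out.1 e.out.2).re
  map_add' X Y := by funext e; simp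
  map_smul' r X := by funext e; simp [Matrix.smul_apply, Complex.smul_re]

lemma sym2_out_mk (d : ℕ) (e : Sym2 (Fin d)) : s(e.out.1, e.out.2) = e := by
  conv_rhs => rw [← e.out_eq]

lemma phiMap_apply_mk {d : ℕ} {A : Matrix (Fin d) (Fin d) ℂ}
    (hA2 : ∀ i j, A j i = A i j) (i j : Fin d) : phiMap d A s(i, j) = (A i j).re := by
  have h := sym2_out_mk d s(i, j)
  rcases Sym2.eq_iff.mp h with ⟨h1, h2⟩ | ⟨h1, h2⟩
  · show (A (Quot.out s(i,j)).1 (Quot.out s(i,j)).2).re = (A i j).re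
    rw [h1, h2]
  · show (A (Quot.out s(i,j)).1 (Quot.out s(i,j)).2).re = (A i j).re
    rw [h1, h2, hA2]

noncomputable def ellMap (d : ℕ) : (Sym2 (Fin d) → ℝ) →ₗ[ℝ] ℝ where
  toFun v := ∑ i : Fin d, v s(i, i)
  map_add' X Y := by simp [Finset.sum_add_distrib]
  map_smul' r X := by simp [Finset.mul_sum]

lemma phiMap_mem_ker {d : ℕ} {A : Matrix (Fin d) (Fin d) ℂ} (hA : A ∈ Srs d) :
    phiMap d A ∈ LinearMap.ker (ellMap d) := by
  obtain ⟨hA1, hA2, hA3⟩ := hA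
  show ∑ i : Fin d, phiMap d A s(i, i) = 0
  rw [Finset.sum_congr rfl (fun i _ => phiMap_apply_mk hA2 i i)]
  have : (A.trace).re = 0 := by rw [hA3]; simp
  rw [← this]
  simp [Matrix.trace, Matrix.diag, Complex.re_sum]

lemma phiMap_inj_on_Srs {d : ℕ} {A : Matrix (Fin d) (Fin d) ℂ}
    (hA : A ∈ Srs d) (h : phiMap d A = 0) : A = 0 := by
  obtain ⟨hA1, hA2, _⟩ := hA
  ext i j
  have hre := congrFun h s(i, j)
  rw [phiMap_apply_mk hA2] at hre
  simp only [Pi.zero_apply] at hre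
  have him := hA1 i j
  simp only [Matrix.zero_apply]
  exact Complex.ext hre him

lemma finrank_Srs_succ_le (d : ℕ) (hd : d ≠ 0) :
    Module.finrank ℝ (Srs d) + 1 ≤ Fintype.card (Sym2 (Fin d)) := by
  let ψ : Srs d →ₗ[ℝ] LinearMap.ker (ellMap d) :=
    ((phiMap d).comp (Srs d).subtype).codRestrict (LinearMap.ker (ellMap d))
      (fun x => phiMap_mem_ker x.2)
  have hinj : Function.Injective ψ := by
    intro x y hxy
    have hval : phiMap d (x : Matrix (Fin d) (Fin d) ℂ) = phiMap d (y : Matrix (Fin d) (Fin d) ℂ) :=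
      congrArg Subtype.val hxy
    have h0 : phiMap d ((x : Matrix (Fin d) (Fin d) ℂ) - y) = 0 := by
      rw [map_sub, hval, sub_self]
    have := phiMap_inj_on_Srs (Submodule.sub_mem _ x.2 y.2) h0
    exact Subtype.ext (sub_eq_zero.mp this)
  have h1 : Module.finrank ℝ (Srs d) ≤ Module.finrank ℝ (LinearMap.ker (ellMap d)) :=
    LinearMap.finrank_le_finrank_of_injective hinj
  have hsurj : Function.Surjective (ellMap d) := by
    intro x
    refine ⟨fun _ => x / d, ?_⟩
    show ∑ _i : Fin d, x / (d : ℝ) = x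
    rw [Finset.sum_const, Finset.card_univ, Fintype.card_fin, nsmul_eq_mul]
    field_simp
  have hcc : Module.finrank ℝ (Sym2 (Fin d) → ℝ) = Fintype.card (Sym2 (Fin d)) :=
    Module.finrank_pi ℝ
  have h2 := LinearMap.finrank_range_add_finrank_ker (ellMap d)
  rw [LinearMap.range_eq_top.mpr hsurj, finrank_top, Module.finrank_self, hcc] at h2
  omega

theorem main_bound
    (d m : ℕ) (H : Fin m → Matrix (Fin d) (Fin d) ℂ)
    (hH : ∀ j, (H j).IsHermitian) (htr : ∀ j, (H j).trace = 0)
    (hstoq : ∃ U ∈ Matrix.unitaryGroup (Fin d) ℂ, ∀ j, IsStoquastic (U * H j * Uᴴ)) :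
    2 * Module.finrank ℝ ((sInf {W : Submodule ℝ (Matrix (Fin d) (Fin d) ℂ) |
      (∀ X ∈ W, ∀ Y ∈ W, tracelessJordan X Y ∈ W) ∧ Set.range H ⊆ W} :
      Submodule ℝ (Matrix (Fin d) (Fin d) ℂ))) ≤ d ^ 2 + d - 1 := by
  rcases Nat.eq_zero_or_pos d with hd | hd
  · subst hd
    haveI : Subsingleton (Matrix (Fin 0) (Fin 0) ℂ) :=
      ⟨fun a b => by ext i; exact i.elim0⟩
    have h0 : Module.finrank ℝ (Matrix (Fin 0) (Fin 0) ℂ) = 0 :=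
      Module.finrank_zero_of_subsingleton
    have := Submodule.finrank_le (sInf {W : Submodule ℝ (Matrix (Fin 0) (Fin 0) ℂ) |
      (∀ X ∈ W, ∀ Y ∈ W, tracelessJordan X Y ∈ W) ∧ Set.range H ⊆ W})
    omega
  · obtain ⟨U, hU, hst⟩ := hstoq
    set Wc := (Srs d).comap (conjL U) with hWdef
    have hWclosed : ∀ X ∈ Wc, ∀ Y ∈ Wc, tracelessJordan X Y ∈ Wc := by
      intro X hX Y hY
      show conjL U (tracelessJordan X Y) ∈ Srs d
      rw [conjL_jordan hU]
      exact jordan_mem_Srs hd.ne' hX hY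
    have hrange : Set.range H ⊆ Wc := by
      rintro _ ⟨j, rfl⟩
      show conjL U (H j) ∈ Srs d
      exact stoquastic_mem_Srs (hst j) ((conjL_trace hU (H j)).trans (htr j))
    have hle : sInf {W : Submodule ℝ (Matrix (Fin d) (Fin d) ℂ) |
        (∀ X ∈ W, ∀ Y ∈ W, tracelessJordan X Y ∈ W) ∧ Set.range H ⊆ W} ≤ Wc :=
      sInf_le ⟨hWclosed, hrange⟩
    have h1 := Submodule.finrank_mono hle
    let g : Wc →ₗ[ℝ] Srs d :=
      ((conjL U).domRestrict Wc).codRestrict (Srs d) (fun x => x.2)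
    have hg : Function.Injective g := by
      intro x y hxy
      have : conjL U (x : Matrix (Fin d) (Fin d) ℂ) = conjL U (y : Matrix (Fin d) (Fin d) ℂ) :=
        congrArg Subtype.val hxy
      exact Subtype.ext (conjL_injective hU this)
    have h2 : Module.finrank ℝ Wc ≤ Module.finrank ℝ (Srs d) :=
      LinearMap.finrank_le_finrank_of_injective hg
    have h3 := finrank_Srs_succ_le d hd.ne'
    have h4 : 2 * Fintype.card (Sym2 (Fin d)) = d ^ 2 + d := by
      rw [Sym2.card, Fintype.card_fin, Nat.choose_two_right, Nat.succ_sub_one,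
        Nat.mul_div_cancel' (by simpa [mul_comm] using (Nat.even_mul_succ_self d).two_dvd)]
      ring
    have h5 : 1 ≤ d ^ 2 := Nat.one_le_pow 2 d hd
    omega

theorem simStoquasticizable_JClosure_dim_bound
    (d m : ℕ) (H : Fin m → Matrix (Fin d) (Fin d) ℂ)
    (hH : ∀ j, (H j).IsHermitian) (htr : ∀ j, (H j).trace = 0)
    (hstoq : SimStoquasticizable H) :
    2 * Module.finrank ℝ (JClosure (Set.range H)) ≤ d ^ 2 + d - 1 := by
  exact main_bound d m H hH htr hstoq
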